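/- arXiv:1211.6137 — 7 statements merged into one kernel-verified Lean document; each statement's English description precedes it below -/
import Mathlib

section
/- Let G be a finite group with property B and let N be a normal subgroup of G. Then the quotient group G/N also has property B. -/
/-- A subset `X` of a group `G` is a minimal generating set if it generates `G`
and no proper subset of `X` generates `G`. -/
def IsMinimalGenSet {G : Type*} [Group G] (X : Set G) : Prop :=
  Subgroup.closure X = ⊤ ∧ ∀ Y : Set G, Y ⊂ X → Subgroup.closure Y ≠ ⊤

/-- A group has property `B` if all its minimal generating sets have the same size. -/
def HasPropB (G : Type*) [Group G] : Prop :=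
  ∀ X Y : Set G, IsMinimalGenSet X → IsMinimalGenSet Y → X.ncard = Y.ncard

/-- `dGen G` is the smallest size of a minimal generating set of `G`. -/
noncomputable def dGen (G : Type*) [Group G] : ℕ :=
  sInf {n | ∃ X : Set G, IsMinimalGenSet X ∧ X.ncard = n}

/-- `mGen G` is the largest size of a minimal generating set of `G`. -/
noncomputable def mGen (G : Type*) [Group G] : ℕ :=
  sSup {n | ∃ X : Set G, IsMinimalGenSet X ∧ X.ncard = n}

/-- Key lifting lemma: given an inclusion-minimal subgroup `H0` mapping onto `G ⧸ N` and an
inclusion-minimal `S ⊆ N` with `H0 ⊔ ⟨S⟩ = ⊤`, every minimal generating set `X` of `G ⧸ N`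
yields a minimal generating set of `G` of size `X.ncard + S.ncard`. -/
lemma exists_minGenSet_lift {G : Type*} [Group G] [Finite G] {N : Subgroup G} [N.Normal]
    {H0 : Subgroup G}
    (hH0 : H0.map (QuotientGroup.mk' N) = ⊤)
    (hH0min : ∀ H : Subgroup G, H.map (QuotientGroup.mk' N) = ⊤ → ¬ H < H0)
    {S : Set G} (hSN : S ⊆ (N : Set G))
    (hSgen : H0 ⊔ Subgroup.closure S = ⊤)
    (hSmin : ∀ S' : Set G, S' ⊆ (N : Set G) → H0 ⊔ Subgroup.closure S' = ⊤ → ¬ S' ⊂ S)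
    (X : Set (G ⧸ N)) (hX : IsMinimalGenSet X) :
    ∃ W : Set G, IsMinimalGenSet W ∧ W.ncard = X.ncard + S.ncard := by
  set π := QuotientGroup.mk' N with hπdef
  have hsec : ∀ q : G ⧸ N, ∃ g, g ∈ H0 ∧ π g = q := by
    intro q
    have hq : q ∈ H0.map π := by rw [hH0]; trivial
    simpa [Subgroup.mem_map] using hq
  choose s hsH hsπ using hsec
  have hsinj : Function.Injective s := fun a b h => by rw [← hsπ a, ← hsπ b, h]
  set X' : Set G := s '' X with hX'def
  have hX'sub : X' ⊆ (H0 : Set G) := by rintro _ ⟨q, hq, rfl⟩; exact hsH q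
  have hπX' : π '' X' = X := by
    rw [hX'def, ← Set.image_comp]
    have hcomp : π ∘ s = id := funext hsπ
    rw [hcomp, Set.image_id]
  have h1X : (1 : G ⧸ N) ∉ X := by
    intro h1
    have hle : Subgroup.closure X ≤ Subgroup.closure (X \ {1}) := by
      rw [Subgroup.closure_le]
      intro x hx
      by_cases hx1 : x = 1
      · rw [hx1]; exact Subgroup.one_mem _
      · exact Subgroup.subset_closure ⟨hx, hx1⟩
    exact hX.2 (X \ {1}) (Set.sdiff_singleton_ssubset.mpr h1)
      (eq_top_iff.mpr (le_trans (le_of_eq hX.1.symm) hle))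
  have hclX' : Subgroup.closure X' = H0 := by
    have hle : Subgroup.closure X' ≤ H0 := (Subgroup.closure_le _).mpr hX'sub
    have hmap : (Subgroup.closure X').map π = ⊤ := by
      rw [MonoidHom.map_closure, hπX', hX.1]
    rcases hle.lt_or_eq with hlt | heq
    · exact absurd hlt (hH0min _ hmap)
    · exact heq
  have hSone : ∀ z ∈ S, π z = 1 := by
    intro z hz
    have : z ∈ N := hSN hz
    simpa [hπdef, QuotientGroup.mk'_apply, QuotientGroup.eq_one_iff] using this
  refine ⟨X' ∪ S, ⟨?_, ?_⟩, ?_⟩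
  · rw [Subgroup.closure_union, hclX', hSgen]
  · intro Z hZ htop
    obtain ⟨w, hw, hwZ⟩ := Set.exists_of_ssubset hZ
    by_cases hwX : w ∈ X'
    · set q := π w with hq
      have hqX : q ∈ X := hπX' ▸ ⟨w, hwX, rfl⟩
      have hle : Subgroup.closure Z ≤ Subgroup.comap π (Subgroup.closure (X \ {q})) := by
        rw [Subgroup.closure_le]
        intro z hz
        have hzw : z ≠ w := fun h => hwZ (h ▸ hz)
        rcases hZ.1 hz with hz' | hz'
        · have hπz : π z ∈ X := hπX' ▸ ⟨z, hz', rfl⟩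
          have hπzq : π z ≠ q := by
            intro h
            have hz2 : z = s (π z) := by
              obtain ⟨a, ha, rfl⟩ := hz'; rw [hsπ]
            have hw2 : w = s (π w) := by
              obtain ⟨b, hb, rfl⟩ := hwX; rw [hsπ]
            exact hzw (by rw [hz2, h, hq, ← hw2])
          exact Subgroup.mem_comap.mpr (Subgroup.subset_closure ⟨hπz, hπzq⟩)
        · have h1 : π z = 1 := hSone z hz'
          exact Subgroup.mem_comap.mpr (by rw [h1]; exact Subgroup.one_mem _)
      have hKtop : Subgroup.closure (X \ {q}) = ⊤ := by
        rw [eq_top_iff]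
        intro x _
        obtain ⟨g, rfl⟩ := QuotientGroup.mk'_surjective N x
        have hg : g ∈ Subgroup.closure Z := htop ▸ Subgroup.mem_top g
        exact Subgroup.mem_comap.mp (hle hg)
      exact hX.2 (X \ {q}) (Set.sdiff_singleton_ssubset.mpr hqX) hKtop
    · have hwS : w ∈ S := by
        rcases hw with h | h
        · exact absurd h hwX
        · exact h
      have hle : Subgroup.closure Z ≤ Subgroup.closure (X' ∪ (S \ {w})) := by
        apply Subgroup.closure_mono
        intro z hz
        have hzw : z ≠ w := fun h => hwZ (h ▸ hz)
        rcases hZ.1 hz with h | h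
        · exact Or.inl h
        · exact Or.inr ⟨h, hzw⟩
      have hsup : H0 ⊔ Subgroup.closure (S \ {w}) = ⊤ := by
        rw [eq_top_iff, ← htop]
        refine le_trans hle ?_
        rw [Subgroup.closure_union, hclX']
      exact hSmin (S \ {w}) (fun x hx => hSN hx.1) hsup (Set.sdiff_singleton_ssubset.mpr hwS)
  · have hdisj : Disjoint X' S := by
      rw [Set.disjoint_left]
      intro x hx hxS
      have h1 : π x = 1 := hSone x hxS
      have hmem : π x ∈ X := hπX' ▸ ⟨x, hx, rfl⟩
      exact h1X (h1 ▸ hmem)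
    rw [Set.ncard_union_eq hdisj (Set.toFinite _) (Set.toFinite _), hX'def,
      Set.ncard_image_of_injective _ hsinj]

theorem quotient_of_B_group_is_B_group (G : Type*) [Group G] [Finite G]
    (hG : HasPropB G) (N : Subgroup G) [N.Normal] :
    HasPropB (G ⧸ N) := by
  classical
  have hfinsub : Finite (Subgroup G) :=
    Finite.of_injective (fun H => (H : Set G)) SetLike.coe_injective
  intro X Y hX hY
  set π := QuotientGroup.mk' N with hπdef
  obtain ⟨H0, hH0, hH0min⟩ := (wellFounded_lt (α := Subgroup G)).has_min
    {H : Subgroup G | H.map π = ⊤}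
    ⟨⊤, Subgroup.map_top_of_surjective _ (QuotientGroup.mk'_surjective N)⟩
  have hsup : H0 ⊔ N = ⊤ := by
    rw [eq_top_iff]
    intro g _
    have hg : π g ∈ H0.map π := by rw [hH0]; trivial
    obtain ⟨h, hh, hhg⟩ := Subgroup.mem_map.mp hg
    obtain ⟨n, hn, rfl⟩ := (QuotientGroup.mk'_eq_mk' N).mp hhg
    exact mul_mem (Subgroup.mem_sup_left hh) (Subgroup.mem_sup_right hn)
  obtain ⟨S, hS, hSmin⟩ := (wellFounded_lt (α := Set G)).has_min
    {S : Set G | S ⊆ (N : Set G) ∧ H0 ⊔ Subgroup.closure S = ⊤}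
    ⟨(N : Set G), subset_rfl, by rw [Subgroup.closure_eq]; exact hsup⟩
  obtain ⟨hSN, hSgen⟩ := hS
  have hSmin' : ∀ S' : Set G, S' ⊆ (N : Set G) → H0 ⊔ Subgroup.closure S' = ⊤ → ¬ S' ⊂ S :=
    fun S' h1 h2 => hSmin S' ⟨h1, h2⟩
  obtain ⟨WX, hWX, hWXcard⟩ :=
    exists_minGenSet_lift hH0 (fun H hH => hH0min H hH) hSN hSgen hSmin' X hX
  obtain ⟨WY, hWY, hWYcard⟩ :=
    exists_minGenSet_lift hH0 (fun H hH => hH0min H hH) hSN hSgen hSmin' Y hY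
  have hcard := hG WX WY hWX hWY
  rw [hWXcard, hWYcard] at hcard
  exact Nat.add_right_cancel hcard
end

section
/- Let G be a finite cyclic group. Then G has property B if and only if the order of G is a prime power (possibly 1). -/
open Subgroup

section Aux

variable {G : Type*} [Group G]

lemma aux_zpowers_pow_dvd (g : G) {d e : ℕ} (h : d ∣ e) :
    zpowers (g ^ e) ≤ zpowers (g ^ d) := by
  rw [zpowers_le]
  obtain ⟨c, rfl⟩ := h
  rw [pow_mul]
  exact npow_mem_zpowers _ _

lemma aux_zpowers_pow_gcd (g : G) (a : ℕ) :
    zpowers (g ^ a) = zpowers (g ^ Nat.gcd (orderOf g) a) := by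
  set n := orderOf g with hn
  apply le_antisymm
  · exact aux_zpowers_pow_dvd g (Nat.gcd_dvd_right n a)
  · rw [zpowers_le]
    have key : g ^ Nat.gcd n a = (g ^ a) ^ Nat.gcdB n a := by
      have hb : (Nat.gcd n a : ℤ) = n * Nat.gcdA n a + a * Nat.gcdB n a :=
        Nat.gcd_eq_gcd_ab n a
      calc g ^ Nat.gcd n a = g ^ (Nat.gcd n a : ℤ) := (zpow_natCast g _).symm
        _ = g ^ ((n : ℤ) * Nat.gcdA n a + (a : ℤ) * Nat.gcdB n a) := by rw [← hb]
        _ = (g ^ (n : ℤ)) ^ Nat.gcdA n a * (g ^ (a : ℤ)) ^ Nat.gcdB n a := by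
            rw [zpow_add, zpow_mul, zpow_mul]
        _ = (g ^ a) ^ Nat.gcdB n a := by
            rw [zpow_natCast, zpow_natCast, hn, pow_orderOf_eq_one, one_zpow, one_mul]
    rw [key]
    exact zpow_mem_zpowers _ _

lemma aux_chain [Finite G] (hG : IsCyclic G) {p k : ℕ} (hp : p.Prime)
    (hcard : Nat.card G = p ^ k) (x y : G) :
    zpowers x ≤ zpowers y ∨ zpowers y ≤ zpowers x := by
  obtain ⟨g, hg⟩ := hG.exists_generator
  have hord : orderOf g = Nat.card G := orderOf_eq_card_of_forall_mem_zpowers hg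
  obtain ⟨a, ha⟩ := (mem_powers_iff_mem_zpowers).mpr (hg x)
  obtain ⟨b, hb⟩ := (mem_powers_iff_mem_zpowers).mpr (hg y)
  subst ha hb
  rw [aux_zpowers_pow_gcd g a, aux_zpowers_pow_gcd g b]
  have hia : Nat.gcd (orderOf g) a ∣ p ^ k := hord ▸ hcard ▸ Nat.gcd_dvd_left _ _
  have hib : Nat.gcd (orderOf g) b ∣ p ^ k := hord ▸ hcard ▸ Nat.gcd_dvd_left _ _
  obtain ⟨i, hik, hi⟩ := (Nat.dvd_prime_pow hp).mp hia
  obtain ⟨j, hjk, hj⟩ := (Nat.dvd_prime_pow hp).mp hib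
  rw [hi, hj]
  rcases le_total i j with h | h
  · exact Or.inr (aux_zpowers_pow_dvd g (pow_dvd_pow p h))
  · exact Or.inl (aux_zpowers_pow_dvd g (pow_dvd_pow p h))

lemma aux_minimal_singleton [Finite G] (hG : IsCyclic G) {p k : ℕ} (hp : p.Prime)
    (hcard : Nat.card G = p ^ k) (hk : k ≠ 0) {X : Set G} (hX : IsMinimalGenSet X) :
    ∃ x, X = {x} := by
  have hnt : Nontrivial G := by
    refine Finite.one_lt_card_iff_nontrivial.mp ?_
    rw [hcard]
    exact Nat.one_lt_pow hk hp.one_lt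
  have hne : X.Nonempty := by
    by_contra h
    rw [Set.not_nonempty_iff_eq_empty] at h
    have := hX.1
    rw [h, Subgroup.closure_empty] at this
    exact bot_ne_top this
  obtain ⟨x₀, hx₀X, hx₀⟩ := Set.Finite.exists_maximalFor orderOf X X.toFinite hne
  have key : ∀ y ∈ X, y ∈ zpowers x₀ := by
    intro y hy
    rcases aux_chain hG hp hcard y x₀ with h | h
    · exact h (mem_zpowers y)
    · have hdvd : orderOf x₀ ∣ orderOf y := orderOf_dvd_of_mem_zpowers (h (mem_zpowers x₀))
      have hle : orderOf x₀ ≤ orderOf y := Nat.le_of_dvd (orderOf_pos y) hdvd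
      have heq : orderOf x₀ = orderOf y := le_antisymm hle (hx₀ hy hle)
      have : zpowers x₀ = zpowers y := by
        refine Subgroup.eq_of_le_of_card_ge h (le_of_eq ?_)
        rw [Nat.card_zpowers, Nat.card_zpowers, heq]
      rw [this]
      exact mem_zpowers y
  have htop : zpowers x₀ = ⊤ := by
    have h1 : Subgroup.closure X ≤ zpowers x₀ := (Subgroup.closure_le _).mpr key
    rw [hX.1] at h1
    exact le_antisymm le_top h1
  refine ⟨x₀, ?_⟩
  by_contra hXx
  have hss : {x₀} ⊂ X := (Set.singleton_subset_iff.mpr hx₀X).ssubset_of_ne (Ne.symm hXx)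
  refine hX.2 {x₀} hss ?_
  rw [← Subgroup.zpowers_eq_closure, htop]

end Aux

theorem cyclic_B_group_iff_prime_power (G : Type*) [Group G] [Finite G]
    (hG : IsCyclic G) :
    HasPropB G ↔ ∃ (p k : ℕ), p.Prime ∧ Nat.card G = p ^ k := by
  constructor
  · intro hB
    by_contra hnp
    push_neg at hnp
    set n := Nat.card G with hn
    have hn0 : 0 < n := Nat.card_pos
    have hn1 : n ≠ 1 := fun h => hnp 2 0 Nat.prime_two (by rw [h, pow_zero])
    have hnt : Nontrivial G := Finite.one_lt_card_iff_nontrivial.mp (by omega)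
    set p := n.minFac with hpdef
    have hp : p.Prime := Nat.minFac_prime hn1
    set a := n.factorization p with hadef
    set m := n / p ^ a with hmdef
    have hnm : p ^ a * m = n := Nat.ordProj_mul_ordCompl_eq_self n p
    have hpm : ¬ p ∣ m := Nat.not_dvd_ordCompl hp (by omega)
    have ha1 : a ≠ 0 := by
      have := hp.factorization_pos_of_dvd (by omega) n.minFac_dvd
      omega
    have hm1 : m ≠ 1 := fun h => hnp p a hp (by rw [← hnm, h, mul_one])
    have hm0 : 0 < m := by
      rcases Nat.eq_zero_or_pos m with h | h
      · rw [h, mul_zero] at hnm; omega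
      · exact h
    have hpa1 : 1 < p ^ a := Nat.one_lt_pow ha1 hp.one_lt
    obtain ⟨g, hg⟩ := hG.exists_generator
    have hord : orderOf g = n := orderOf_eq_card_of_forall_mem_zpowers hg
    set x := g ^ m with hxdef
    set y := g ^ (p ^ a) with hydef
    have hox : orderOf x = p ^ a := by
      rw [hxdef, orderOf_pow, hord, Nat.gcd_eq_right ⟨p ^ a, by rw [mul_comm]; exact hnm.symm⟩,
        ← hnm, Nat.mul_div_cancel _ hm0]
    have hoy : orderOf y = m := by
      rw [hydef, orderOf_pow, hord, Nat.gcd_eq_right ⟨m, hnm.symm⟩]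
    have hxy : x ≠ y := by
      intro h
      rw [h, hoy] at hox
      exact hpm (hox ▸ dvd_pow_self p ha1)
    have hX1 : IsMinimalGenSet {g} := by
      constructor
      · rw [← Subgroup.zpowers_eq_closure]
        exact (Subgroup.eq_top_iff' _).mpr hg
      · intro Y hY
        rw [Set.ssubset_singleton_iff] at hY
        rw [hY, Subgroup.closure_empty]
        exact bot_ne_top
    have hX2 : IsMinimalGenSet {x, y} := by
      constructor
      · set H := Subgroup.closure ({x, y} : Set G) with hH
        have hxmem : x ∈ H := Subgroup.subset_closure (by simp)
        have hymem : y ∈ H := Subgroup.subset_closure (by simp)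
        have hdx : p ^ a ∣ Nat.card H := by
          rw [← hox, ← Subgroup.orderOf_mk x hxmem]
          exact orderOf_dvd_natCard _
        have hdy : m ∣ Nat.card H := by
          rw [← hoy, ← Subgroup.orderOf_mk y hymem]
          exact orderOf_dvd_natCard _
        have hcop : Nat.Coprime (p ^ a) m :=
          Nat.Coprime.pow_left a ((hp.coprime_iff_not_dvd).mpr hpm)
        have hdn : n ∣ Nat.card H := hnm ▸ hcop.mul_dvd_of_dvd_of_dvd hdx hdy
        have hdn' : Nat.card H ∣ n := H.card_subgroup_dvd_card
        exact Subgroup.eq_top_of_card_eq H (Nat.dvd_antisymm hdn' hdn)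
      · intro Y hY
        have hYne : Y ≠ {x, y} := hY.ne
        rcases Set.subset_pair_iff_eq.mp hY.subset with rfl | rfl | rfl | h
        · rw [Subgroup.closure_empty]; exact bot_ne_top
        · intro htop
          have hc : orderOf x = n := by
            rw [← Nat.card_zpowers, Subgroup.zpowers_eq_closure, htop]
            exact Subgroup.card_top
          rw [hox] at hc
          have : m = 1 := by
            have := hnm
            nlinarith [hc, hnm]
          exact hm1 this
        · intro htop
          have hc : orderOf y = n := by
            rw [← Nat.card_zpowers, Subgroup.zpowers_eq_closure, htop]
            exact Subgroup.card_top
          rw [hoy] at hc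
          have : p ^ a = 1 := by nlinarith [hc, hnm]
          omega
        · exact absurd h hYne
    have := hB {g} {x, y} hX1 hX2
    rw [Set.ncard_singleton, Set.ncard_pair hxy] at this
    omega
  · rintro ⟨p, k, hp, hc⟩ X Y hX hY
    rcases Nat.eq_zero_or_pos k with rfl | hk
    · rw [pow_zero] at hc
      have hsub : Subsingleton G := (Nat.card_eq_one_iff_unique.mp hc).1
      have hempty : ∀ Z : Set G, IsMinimalGenSet Z → Z = ∅ := by
        intro Z hZ
        by_contra h
        refine hZ.2 ∅ (Set.empty_ssubset.mpr (Set.nonempty_iff_ne_empty.mpr h)) ?_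
        rw [Subgroup.closure_empty]
        exact Subsingleton.elim _ _
      rw [hempty X hX, hempty Y hY]
    · obtain ⟨x, rfl⟩ := aux_minimal_singleton hG hp hc (by omega) hX
      obtain ⟨y, rfl⟩ := aux_minimal_singleton hG hp hc (by omega) hY
      rw [Set.ncard_singleton, Set.ncard_singleton]
end

section
/- Let G be a finite cyclic group. Then m(G), the largest size of a minimal generating set of G, equals the number of distinct prime divisors of the order of G. -/
section Aux

variable {G : Type*} [Group G]

/-- The subgroup `{x | x ^ m = 1}` of a group in which all elements commute. -/
def kerPow (hc : ∀ a b : G, a * b = b * a) (m : ℕ) : Subgroup G where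
  carrier := {x | x ^ m = 1}
  one_mem' := one_pow m
  mul_mem' := by
    intro a b ha hb
    have : (a * b) ^ m = a ^ m * b ^ m := Commute.mul_pow (hc a b) m
    simp only [Set.mem_setOf_eq] at ha hb ⊢
    rw [this, ha, hb, one_mul]
  inv_mem' := by
    intro a ha
    simp only [Set.mem_setOf_eq] at ha ⊢
    rw [inv_pow, ha, inv_one]

lemma mem_kerPow {hc : ∀ a b : G, a * b = b * a} {m : ℕ} {x : G} :
    x ∈ kerPow hc m ↔ x ^ m = 1 := Iff.rfl

variable [Finite G]

lemma subgroup_le_kerPow (hc : ∀ a b : G, a * b = b * a) {K : Subgroup G} {m : ℕ}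
    (h : Nat.card K ∣ m) : K ≤ kerPow hc m := by
  intro x hx
  rw [mem_kerPow]
  exact orderOf_dvd_iff_pow_eq_one.mp ((K.orderOf_dvd_natCard hx).trans h)

lemma exists_prime_le_kerPow (hc : ∀ a b : G, a * b = b * a) {K : Subgroup G} (hK : K ≠ ⊤) :
    ∃ p ∈ (Nat.card G).primeFactors, K ≤ kerPow hc (Nat.card G / p) := by
  have hn0 : Nat.card G ≠ 0 := Nat.card_pos.ne'
  have hd : Nat.card K ∣ Nat.card G := K.card_subgroup_dvd_card
  have hne : Nat.card K ≠ Nat.card G := fun h => hK (K.eq_top_of_card_eq h)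
  have hq1 : Nat.card G / Nat.card K ≠ 1 := by
    intro h
    exact hne (Nat.eq_of_dvd_of_div_eq_one hd h)
  set p := (Nat.card G / Nat.card K).minFac with hp
  have hq0 : Nat.card G / Nat.card K ≠ 0 := Nat.div_ne_zero_iff_of_dvd hd |>.mpr ⟨hn0, Nat.card_pos.ne'⟩
  have hpp : p.Prime := Nat.minFac_prime hq1
  have hpdvd : p ∣ Nat.card G / Nat.card K := Nat.minFac_dvd _
  have hpn : p ∣ Nat.card G := hpdvd.trans (Nat.div_dvd_of_dvd hd)
  refine ⟨p, Nat.mem_primeFactors.mpr ⟨hpp, hpn, hn0⟩, ?_⟩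
  apply subgroup_le_kerPow
  rw [Nat.dvd_div_iff_mul_dvd hpn, mul_comm]
  rw [Nat.dvd_div_iff_mul_dvd hd] at hpdvd
  exact hpdvd

lemma kerPow_ne_top (hc : ∀ a b : G, a * b = b * a) {g : G} (hg : orderOf g = Nat.card G)
    {p : ℕ} (hp : p ∈ (Nat.card G).primeFactors) : kerPow hc (Nat.card G / p) ≠ ⊤ := by
  intro h
  have hgk : g ∈ kerPow hc (Nat.card G / p) := h ▸ Subgroup.mem_top g
  rw [mem_kerPow, ← orderOf_dvd_iff_pow_eq_one, hg] at hgk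
  have hn0 : 0 < Nat.card G := Nat.card_pos
  have hlt : Nat.card G / p < Nat.card G :=
    Nat.div_lt_self hn0 (Nat.prime_of_mem_primeFactors hp).one_lt
  have := Nat.le_of_dvd ?_ hgk
  · omega
  · have hpn : p ∣ Nat.card G := Nat.dvd_of_mem_primeFactors hp
    have := Nat.pos_of_mem_primeFactors hp
    exact Nat.div_pos (Nat.le_of_dvd hn0 hpn) this

/-- Upper bound: any minimal generating set has size at most the number of prime factors. -/
lemma ncard_le_primeFactors (hc : ∀ a b : G, a * b = b * a) {g : G}
    (hg : orderOf g = Nat.card G) {X : Set G} (hX : IsMinimalGenSet X) :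
    X.ncard ≤ (Nat.card G).primeFactors.card := by
  classical
  have hmem : ∀ x ∈ X, ∃ p, p ∈ (Nat.card G).primeFactors ∧
      Subgroup.closure (X \ {x}) ≤ kerPow hc (Nat.card G / p) := by
    intro x hx
    obtain ⟨p, hp1, hp2⟩ :=
      exists_prime_le_kerPow hc (hX.2 _ (Set.sdiff_singleton_ssubset.mpr hx))
    exact ⟨p, hp1, hp2⟩
  choose! f hf1 hf2 using hmem
  rw [← Set.ncard_coe_finset]
  apply Set.ncard_le_ncard_of_injOn f (fun a ha => by exact_mod_cast hf1 a ha)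
  · intro a ha b hb hab
    by_contra hne
    have hXsub : X ⊆ (kerPow hc (Nat.card G / f a) : Set G) := by
      intro z hz
      by_cases hza : z = a
      · subst hza
        have hzb : z ∈ X \ {b} := ⟨hz, by simpa using hne⟩
        have := hf2 b hb (Subgroup.subset_closure hzb)
        rwa [← hab] at this
      · exact hf2 a ha (Subgroup.subset_closure ⟨hz, hza⟩)
    have hle : Subgroup.closure X ≤ kerPow hc (Nat.card G / f a) :=
      (Subgroup.closure_le _).mpr hXsub
    rw [hX.1] at hle
    exact kerPow_ne_top hc hg (hf1 a ha) (top_le_iff.mp hle)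

/-- The order of `g ^ (n / p ^ vₚ(n))` is `p ^ vₚ(n)`. -/
lemma orderOf_pow_ordProj {g : G} (hg : orderOf g = Nat.card G)
    {p : ℕ} (hp : p ∈ (Nat.card G).primeFactors) :
    orderOf (g ^ (Nat.card G / p ^ (Nat.card G).factorization p))
      = p ^ (Nat.card G).factorization p := by
  have hn0 : Nat.card G ≠ 0 := Nat.card_pos.ne'
  have hq : p ^ (Nat.card G).factorization p ∣ Nat.card G := Nat.ordProj_dvd _ _
  rw [orderOf_pow, hg]
  have hdvd : Nat.card G / p ^ (Nat.card G).factorization p ∣ Nat.card G :=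
    Nat.div_dvd_of_dvd hq
  rw [Nat.gcd_eq_right hdvd]
  exact Nat.div_div_self hq hn0

/-- Lower bound: there is a minimal generating set of size the number of prime factors. -/
lemma exists_minimalGenSet (hc : ∀ a b : G, a * b = b * a) {g : G}
    (hg : orderOf g = Nat.card G) :
    ∃ X : Set G, IsMinimalGenSet X ∧ X.ncard = (Nat.card G).primeFactors.card := by
  classical
  set n := Nat.card G with hn
  have hn0 : n ≠ 0 := Nat.card_pos.ne'
  set F : ℕ → G := fun p => g ^ (n / p ^ n.factorization p) with hF
  set X : Set G := F '' (n.primeFactors : Set ℕ) with hXdef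
  have horder : ∀ p ∈ n.primeFactors, orderOf (F p) = p ^ n.factorization p := by
    intro p hp
    exact orderOf_pow_ordProj hg hp
  have hinj : Set.InjOn F (n.primeFactors : Set ℕ) := by
    intro p hp q hq hpq
    simp only [Finset.coe_sort_coe, Finset.mem_coe] at hp hq
    have h1 := horder p hp
    have h2 := horder q hq
    rw [hpq, h2] at h1
    have hppos : 0 < n.factorization p := by
      have := Nat.Prime.factorization_pos_of_dvd (Nat.prime_of_mem_primeFactors hp) hn0
        (Nat.dvd_of_mem_primeFactors hp)
      exact this
    have hpdvd : p ∣ q ^ n.factorization q := by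
      rw [h1]
      exact dvd_pow_self p hppos.ne'
    have := (Nat.prime_of_mem_primeFactors hp).dvd_of_dvd_pow hpdvd
    exact ((Nat.prime_dvd_prime_iff_eq (Nat.prime_of_mem_primeFactors hp)
      (Nat.prime_of_mem_primeFactors hq)).mp this)
  refine ⟨X, ⟨?_, ?_⟩, ?_⟩
  · -- closure X = ⊤
    set K := Subgroup.closure X with hK
    have hKcard0 : Nat.card K ≠ 0 := Nat.card_pos.ne'
    have hdvd1 : Nat.card K ∣ n := K.card_subgroup_dvd_card
    have hdvd2 : n ∣ Nat.card K := by
      rw [← Nat.factorization_le_iff_dvd hn0 hKcard0, Finsupp.le_def]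
      intro p
      by_cases hp : p ∈ n.primeFactors
      · have hpp := Nat.prime_of_mem_primeFactors hp
        rw [← hpp.pow_dvd_iff_le_factorization hKcard0]
        have hxK : F p ∈ K := Subgroup.subset_closure ⟨p, by simpa using hp, rfl⟩
        have := K.orderOf_dvd_natCard hxK
        rwa [horder p hp] at this
      · rw [← Nat.support_factorization] at hp
        simp [Finsupp.notMem_support_iff.mp hp]
    have : Nat.card K = Nat.card G := Nat.dvd_antisymm hdvd1 hdvd2
    exact K.eq_top_of_card_eq this
  · -- minimality
    intro Y hY hYtop
    obtain ⟨x, hxX, hxY⟩ := Set.exists_of_ssubset hY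
    obtain ⟨p, hp, hpx⟩ := hxX
    simp only [Finset.mem_coe] at hp
    have hYsub : Y ⊆ (kerPow hc (n / p) : Set G) := by
      intro z hz
      have hzX : z ∈ X := hY.1 hz
      obtain ⟨q, hq, hqz⟩ := hzX
      simp only [Finset.mem_coe] at hq
      have hqp : q ≠ p := by
        intro h
        subst h
        rw [hqz] at hpx
        exact hxY (hpx ▸ hz)
      rw [SetLike.mem_coe, mem_kerPow, ← hqz, ← orderOf_dvd_iff_pow_eq_one, horder q hq]
      have hco : Nat.Coprime (q ^ n.factorization q) p :=
        Nat.Coprime.pow_left _ ((Nat.coprime_primes (Nat.prime_of_mem_primeFactors hq)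
          (Nat.prime_of_mem_primeFactors hp)).mpr hqp)
      rw [Nat.dvd_div_iff_mul_dvd (Nat.dvd_of_mem_primeFactors hp), mul_comm]
      exact hco.mul_dvd_of_dvd_of_dvd (Nat.ordProj_dvd _ _) (Nat.dvd_of_mem_primeFactors hp)
    have hle : Subgroup.closure Y ≤ kerPow hc (n / p) := (Subgroup.closure_le _).mpr hYsub
    rw [hYtop] at hle
    exact kerPow_ne_top hc hg hp (top_le_iff.mp hle)
  · rw [hXdef, Set.ncard_image_of_injOn hinj, Set.ncard_coe_finset]

end Aux

theorem mGen_cyclic_eq_card_primeFactors (G : Type*) [Group G] [Finite G]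
    (hG : IsCyclic G) :
    mGen G = (Nat.card G).primeFactors.card := by
  have hc : ∀ a b : G, a * b = b * a := by
    letI := hG.commGroup
    exact fun a b => mul_comm a b
  obtain ⟨g, hg⟩ := hG.exists_generator
  have hgo : orderOf g = Nat.card G := orderOf_eq_card_of_forall_mem_zpowers hg
  obtain ⟨X, hXmin, hXcard⟩ := exists_minimalGenSet hc hgo
  have hmem : (Nat.card G).primeFactors.card ∈
      {n | ∃ X : Set G, IsMinimalGenSet X ∧ X.ncard = n} := ⟨X, hXmin, hXcard⟩
  have hub : ∀ m ∈ {n | ∃ X : Set G, IsMinimalGenSet X ∧ X.ncard = n},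
      m ≤ (Nat.card G).primeFactors.card := by
    rintro m ⟨Y, hY, rfl⟩
    exact ncard_le_primeFactors hc hgo hY
  exact le_antisymm (csSup_le ⟨_, hmem⟩ hub) (le_csSup ⟨_, hub⟩ hmem)
end

section
/- For every finite group G, one has d(G) = d(G/Φ(G)) and m(G) = m(G/Φ(G)), where Φ(G) is the Frattini subgroup of G. -/
section Aux

open Subgroup

variable {G : Type*} [Group G] [Finite G]

private lemma nongen (K : Subgroup G) (h : K ⊔ frattini G = ⊤) : K = ⊤ :=
  frattini_nongenerating h

private lemma frat_map_eq_top_iff {K : Subgroup G} :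
    K.map (QuotientGroup.mk' (frattini G)) = ⊤ ↔ K ⊔ frattini G = ⊤ := by
  constructor
  · intro h
    have := congrArg (Subgroup.comap (QuotientGroup.mk' (frattini G))) h
    rwa [Subgroup.comap_map_eq, Subgroup.comap_top, QuotientGroup.ker_mk'] at this
  · intro h
    apply Subgroup.comap_injective (QuotientGroup.mk'_surjective (frattini G))
    rwa [Subgroup.comap_map_eq, Subgroup.comap_top, QuotientGroup.ker_mk']

/-- Forward direction: image of a minimal generating set is a minimal generating set. -/
private lemma fwd {X : Set G} (hX : IsMinimalGenSet X) :
    IsMinimalGenSet ((QuotientGroup.mk' (frattini G)) '' X) ∧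
      ((QuotientGroup.mk' (frattini G)) '' X).ncard = X.ncard := by
  set π := QuotientGroup.mk' (frattini G) with hπ
  obtain ⟨hgen, hmin⟩ := hX
  -- π is injective on X
  have hinj : Set.InjOn π X := by
    intro x hx y hy hxy
    by_contra hne
    have hker : x⁻¹ * y ∈ frattini G := by
      have : x⁻¹ * y ∈ π.ker := by
        simp [MonoidHom.mem_ker, map_mul, hxy]
      rwa [QuotientGroup.ker_mk'] at this
    have hsub : X ⊆ ↑(closure (X \ {y}) ⊔ frattini G) := by
      intro z hz
      by_cases hzy : z = y
      · have hx' : x ∈ Subgroup.closure (X \ {y}) := subset_closure ⟨hx, by simp [hne]⟩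
        have hy' : x * (x⁻¹ * y) ∈ Subgroup.closure (X \ {y}) ⊔ frattini G :=
          mul_mem (le_sup_left (α := Subgroup G) hx')
            ((le_sup_right (α := Subgroup G)) hker)
        rw [hzy]
        simpa using hy'
      · exact le_sup_left (α := Subgroup G) (subset_closure ⟨hz, hzy⟩)
    have htop : closure (X \ {y}) ⊔ frattini G = ⊤ := by
      have := closure_le (closure (X \ {y}) ⊔ frattini G) |>.mpr hsub
      rw [hgen] at this
      exact top_le_iff.mp this
    exact hmin (X \ {y}) (Set.sdiff_singleton_ssubset.mpr hy) (nongen _ htop)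
  refine ⟨⟨?_, ?_⟩, Set.ncard_image_of_injOn hinj⟩
  · rw [← MonoidHom.map_closure, hgen]
    exact Subgroup.map_top_of_surjective _ (QuotientGroup.mk'_surjective _)
  · rintro Yb ⟨hsub, hne⟩ htop
    obtain ⟨b, hbX, hbY⟩ := Set.exists_of_ssubset ⟨hsub, hne⟩
    obtain ⟨x, hxX, rfl⟩ := hbX
    set Y := X ∩ π ⁻¹' Yb with hY
    have himg : π '' Y = Yb := by
      apply Set.Subset.antisymm
      · rintro _ ⟨y, ⟨_, hy2⟩, rfl⟩; exact hy2
      · intro b hb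
        obtain ⟨z, hzX, rfl⟩ := hsub hb
        exact ⟨z, ⟨hzX, hb⟩, rfl⟩
    have hYss : Y ⊂ X := by
      refine ⟨Set.inter_subset_left, fun hXY => ?_⟩
      exact hbY (hXY hxX).2
    apply hmin Y hYss
    apply nongen
    rw [← frat_map_eq_top_iff]
    rw [← top_le_iff, ← htop, ← himg, MonoidHom.map_closure]
  -- done

/-- Backward direction: a minimal generating set of the quotient lifts. -/
private lemma bwd {Xb : Set (G ⧸ frattini G)} (hX : IsMinimalGenSet Xb) :
    ∃ X : Set G, IsMinimalGenSet X ∧ X.ncard = Xb.ncard := by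
  set π := QuotientGroup.mk' (frattini G) with hπ
  have hπs : Function.Surjective π := QuotientGroup.mk'_surjective _
  set f : (G ⧸ frattini G) → G := Function.surjInv hπs with hf
  have hsec : ∀ a, π (f a) = a := fun a => Function.surjInv_eq hπs a
  have hfinj : Function.Injective f := by
    intro a b hab
    rw [← hsec a, ← hsec b, hab]
  obtain ⟨hgen, hmin⟩ := hX
  refine ⟨f '' Xb, ⟨?_, ?_⟩, Set.ncard_image_of_injective _ hfinj⟩
  · have himg : π '' (f '' Xb) = Xb := by
      rw [Set.image_image]
      simp only [hsec, Set.image_id']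
    apply nongen
    rw [← frat_map_eq_top_iff, MonoidHom.map_closure, himg, hgen]
  · rintro Y ⟨hsub, hne⟩ htop
    obtain ⟨x, hxX, hxY⟩ := Set.exists_of_ssubset ⟨hsub, hne⟩
    have hπinjX : Set.InjOn π (f '' Xb) := by
      rintro _ ⟨a, _, rfl⟩ _ ⟨b, _, rfl⟩ h
      rw [hsec, hsec] at h; rw [h]
    have hss : π '' Y ⊂ π '' (f '' Xb) := by
      refine ⟨Set.image_mono hsub, fun h => ?_⟩
      have : π x ∈ π '' Y := h ⟨x, hxX, rfl⟩
      obtain ⟨y, hy, hyx⟩ := this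
      have : y = x := hπinjX (hsub hy) hxX hyx
      exact hxY (this ▸ hy)
    have himg : π '' (f '' Xb) = Xb := by
      rw [Set.image_image]
      simp only [hsec, Set.image_id']
    rw [himg] at hss
    apply hmin _ hss
    rw [← top_le_iff, ← MonoidHom.map_closure, htop]
    exact le_of_eq (Subgroup.map_top_of_surjective _ hπs).symm

private lemma sets_eq :
    {n | ∃ X : Set G, IsMinimalGenSet X ∧ X.ncard = n} =
      {n | ∃ X : Set (G ⧸ frattini G), IsMinimalGenSet X ∧ X.ncard = n} := by
  ext n
  constructor
  · rintro ⟨X, hX, rfl⟩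
    exact ⟨_, (fwd hX).1, (fwd hX).2⟩
  · rintro ⟨Xb, hX, rfl⟩
    obtain ⟨X, hX', hcard⟩ := bwd hX
    exact ⟨X, hX', hcard⟩

end Aux

theorem dGen_mGen_frattini_quotient (G : Type*) [Group G] [Finite G] :
    dGen G = dGen (G ⧸ frattini G) ∧ mGen G = mGen (G ⧸ frattini G) := by
  constructor
  · unfold dGen; rw [sets_eq]
  · unfold mGen; rw [sets_eq]
end

section
/- Let p be a prime, let Q be a finite abelian group, and let V be a finite-dimensional vector space over the field F_p with p elements, equipped with a linear action of Q (i.e., V is an F_p[Q]-module) such that the action of Q on V is faithful and V is a direct sum of pairwise isomorphic simple F_p[Q]-submodules. Then every non-trivial element of Q acts on V without non-zero fixed vectors. -/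
theorem no_nonzero_fixed_vectors_of_faithful_isotypic (p : ℕ) [Fact p.Prime]
    (Q : Type*) [CommGroup Q] [Finite Q]
    (V : Type*) [AddCommGroup V] [Module (ZMod p) V] [FiniteDimensional (ZMod p) V]
    [Module (MonoidAlgebra (ZMod p) Q) V]
    [IsScalarTower (ZMod p) (MonoidAlgebra (ZMod p) Q) V]
    (hfaith : ∀ g : Q, (∀ v : V, MonoidAlgebra.of (ZMod p) Q g • v = v) → g = 1)
    (hiso : ∃ (ι : Type) (W : ι → Submodule (MonoidAlgebra (ZMod p) Q) V),
      (∀ i, IsSimpleModule (MonoidAlgebra (ZMod p) Q) (W i)) ∧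
      iSupIndep W ∧ (⨆ i, W i) = ⊤ ∧
      ∀ i j, Nonempty ((W i) ≃ₗ[MonoidAlgebra (ZMod p) Q] (W j))) :
    ∀ g : Q, g ≠ 1 → ∀ v : V, MonoidAlgebra.of (ZMod p) Q g • v = v → v = 0 := by
  classical
  obtain ⟨ι, W, hsimple, hindep, hsup, hequiv⟩ := hiso
  intro g hg v hv
  by_contra hvne
  set A := MonoidAlgebra (ZMod p) Q with hA
  set a : A := MonoidAlgebra.of (ZMod p) Q g with ha
  have hint : DirectSum.IsInternal W :=
    DirectSum.isInternal_submodule_of_iSupIndep_of_iSup_eq_top hindep hsup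
  let e : DirectSum ι (fun i => W i) ≃ₗ[A] V :=
    LinearEquiv.ofBijective (DirectSum.coeLinearMap W) hint
  have hu : e.symm v ≠ 0 := by
    intro h
    apply hvne
    have := congrArg e h
    simpa using this
  obtain ⟨i, hi⟩ : ∃ i, e.symm v i ≠ 0 := by
    by_contra h
    push_neg at h
    exact hu (DFinsupp.ext h)
  have key : a • (e.symm v) = e.symm v := by
    rw [← map_smul, hv]
  have hfix_i : a • (e.symm v i) = e.symm v i := by
    have := congrArg (fun u : DirectSum ι (fun j => W j) => u i) key
    simpa [DirectSum.smul_apply] using this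
  -- the fixed points of `a` in `W i` form a nonzero submodule, hence all of `W i`
  letI : CommRing A := MonoidAlgebra.commRing
  let f : W i →ₗ[A] W i := a • LinearMap.id - LinearMap.id
  have hmem : e.symm v i ∈ LinearMap.ker f := by
    simp only [f, LinearMap.mem_ker, LinearMap.sub_apply, LinearMap.smul_apply,
      LinearMap.id_apply, sub_eq_zero]
    exact hfix_i
  have hker : LinearMap.ker f = ⊤ := by
    rcases eq_bot_or_eq_top (LinearMap.ker f) with h | h
    · rw [h, Submodule.mem_bot] at hmem
      exact absurd hmem hi
    · exact h
  have hWi : ∀ x : W i, a • x = x := by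
    intro x
    have hx : x ∈ LinearMap.ker f := hker ▸ Submodule.mem_top
    simpa only [f, LinearMap.mem_ker, LinearMap.sub_apply, LinearMap.smul_apply,
      LinearMap.id_apply, sub_eq_zero] using hx
  have hWj : ∀ j (x : W j), a • x = x := by
    intro j x
    obtain ⟨e'⟩ := hequiv i j
    have := congrArg e' (hWi (e'.symm x))
    rwa [map_smul, e'.apply_symm_apply] at this
  have hall : ∀ w : V, a • w = w := by
    intro w
    have hw : w ∈ ⨆ j, W j := hsup ▸ Submodule.mem_top
    refine Submodule.iSup_induction W (motive := fun w => a • w = w) hw ?_ ?_ ?_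
    · intro j x hx
      have := congrArg (Subtype.val) (hWj j ⟨x, hx⟩)
      simpa using this
    · simp
    · intro x y hx hy
      rw [smul_add, hx, hy]
  exact hg (hfaith g hall)
end

section
/- Let p and q be distinct primes and let G be a finite group with subgroups P and Q such that P is a normal p-subgroup, Q is a cyclic q-subgroup, P ∩ Q = 1, PQ = G, and the centralizer C_Q(P) is a proper subgroup of Q. Then the subgroup generated by Φ(P) and C_Q(P) is contained in the Frattini subgroup Φ(G); that is, every subset of G that generates G modulo the normal subgroup Φ(P)·C_Q(P) already generates G. -/
open Subgroup Finset
open scoped Pointwise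

private lemma mem_zpowers_of_orderOf_dvd'' {Γ : Type*} [Group Γ] [Finite Γ] [IsCyclic Γ]
    {a b : Γ} (h : orderOf a ∣ orderOf b) : a ∈ Subgroup.zpowers b := by
  classical
  haveI := Fintype.ofFinite Γ
  have hb : 0 < orderOf b := orderOf_pos b
  have hT : #{x : Γ | x ^ orderOf b = 1} ≤ orderOf b := IsCyclic.card_pow_eq_one_le hb
  set T : Finset Γ := {x : Γ | x ^ orderOf b = 1} with hTdef
  have hZsub : (Subgroup.zpowers b : Set Γ).toFinset ⊆ T := by
    intro x hx
    rw [Set.mem_toFinset] at hx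
    obtain ⟨k, rfl⟩ := hx
    simp only [hTdef, Finset.mem_filter, Finset.mem_univ, true_and, Set.mem_setOf_eq]
    rw [← zpow_natCast, ← zpow_mul, mul_comm, zpow_mul, zpow_natCast, pow_orderOf_eq_one,
      one_zpow]
  have hZcard : (Subgroup.zpowers b : Set Γ).toFinset.card = orderOf b := by
    rw [Set.toFinset_card]
    exact Fintype.card_zpowers
  have hEq : (Subgroup.zpowers b : Set Γ).toFinset = T :=
    Finset.eq_of_subset_of_card_le hZsub (by omega)
  have haT : a ∈ T := by
    simp only [hTdef, Finset.mem_filter, Finset.mem_univ, true_and, Set.mem_setOf_eq]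
    exact orderOf_dvd_iff_pow_eq_one.mp h
  rw [← hEq, Set.mem_toFinset] at haT
  exact haT

private lemma zpowers_total'' {Γ : Type*} [Group Γ] [Finite Γ] {q : ℕ} (hq : q.Prime)
    (hΓ : IsPGroup q Γ) (hc : IsCyclic Γ) (a b : Γ) :
    a ∈ Subgroup.zpowers b ∨ b ∈ Subgroup.zpowers a := by
  haveI := Fact.mk hq
  haveI := hc
  obtain ⟨s, hs⟩ := (IsPGroup.iff_orderOf.mp hΓ) a
  obtain ⟨t, ht⟩ := (IsPGroup.iff_orderOf.mp hΓ) b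
  rcases le_total s t with h | h
  · exact Or.inl (mem_zpowers_of_orderOf_dvd'' (by rw [hs, ht]; exact pow_dvd_pow q h))
  · exact Or.inr (mem_zpowers_of_orderOf_dvd'' (by rw [hs, ht]; exact pow_dvd_pow q h))

private lemma subgroup_le_total'' {Γ : Type*} [Group Γ] [Finite Γ] {q : ℕ} (hq : q.Prime)
    (hΓ : IsPGroup q Γ) (hc : IsCyclic Γ) (H K : Subgroup Γ) : H ≤ K ∨ K ≤ H := by
  by_cases h : H ≤ K
  · exact Or.inl h
  · obtain ⟨x, hxH, hxK⟩ := SetLike.not_le_iff_exists.mp h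
    refine Or.inr fun k hk => ?_
    rcases zpowers_total'' hq hΓ hc k x with h1 | h2
    · exact Subgroup.zpowers_le.mpr hxH h1
    · exact absurd (Subgroup.zpowers_le.mpr hk h2) hxK

private lemma frattini_map_le_frattini' {G : Type*} [Group G] [Finite G] (P : Subgroup G)
    [P.Normal] : (frattini P).map P.subtype ≤ frattini G := by
  have key : ∀ M : Subgroup G, IsCoatom M → (frattini P).map P.subtype ≤ M := by
    intro M hM
    by_contra hn
    haveI hFN : ((frattini P).map P.subtype).Normal :=
      ConjAct.normal_of_characteristic_of_normal
    have htop : M ⊔ (frattini P).map P.subtype = ⊤ := hM.2 _ (left_lt_sup.mpr hn)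
    have htop' : (frattini P).map P.subtype ⊔ M = ⊤ := by rwa [sup_comm]
    have hsup : (P ⊓ M).subgroupOf P ⊔ frattini P = ⊤ := by
      rw [eq_top_iff']
      intro y
      have hy : (y : G) ∈ ((frattini P).map P.subtype : Set G) * (M : Set G) := by
        rw [← Subgroup.normal_mul, htop']
        exact Subgroup.mem_top (y : G)
      obtain ⟨f, hf, m, hm, hfm⟩ := hy
      have hfP : f ∈ P := Subgroup.map_subtype_le _ hf
      have hmP : m ∈ P := by
        have : m = f⁻¹ * (y : G) := by rw [← hfm]; group
        rw [this]; exact mul_mem (inv_mem hfP) y.2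
      obtain ⟨f', hf', hff⟩ := hf
      have hy' : y = f' * (⟨m, hmP⟩ : P) := by
        apply Subtype.ext
        simp only [Subgroup.coe_mul]
        rw [← hfm]
        congr 1
        exact hff.symm
      rw [hy']
      exact mul_mem (Subgroup.mem_sup_right hf')
        (Subgroup.mem_sup_left (by rw [Subgroup.mem_subgroupOf]; exact ⟨hmP, hm⟩))
    have hPM : P ≤ M := by
      have := frattini_nongenerating hsup
      rw [Subgroup.subgroupOf_eq_top] at this
      exact le_trans this inf_le_right
    exact hn (le_trans (Subgroup.map_subtype_le _) hPM)
  rw [frattini, Order.radical]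
  exact le_iInf₂ key

open scoped Pointwise in
theorem frattiniP_mul_centralizer_le_frattini (p q : ℕ) (hp : p.Prime) (hq : q.Prime)
    (hpq : p ≠ q) (G : Type*) [Group G] [Finite G] (P Q : Subgroup G) [P.Normal]
    (hP : IsPGroup p P) (hQ : IsPGroup q Q) (hQc : IsCyclic Q)
    (hPQ : P ⊓ Q = ⊥) (hprod : (P : Set G) * (Q : Set G) = Set.univ)
    (hC : Q ⊓ Subgroup.centralizer (P : Set G) < Q) :
    (frattini P).map P.subtype ⊔ (Q ⊓ Subgroup.centralizer (P : Set G)) ≤ frattini G := by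
  classical
  set C := Q ⊓ Subgroup.centralizer (P : Set G) with hCdef
  have hCleQ : C ≤ Q := inf_le_left
  -- elements of C are central in G
  have hcent : ∀ c ∈ C, ∀ g : G, Commute g c := by
    intro c hc g
    have hcQ : c ∈ Q := hCleQ hc
    have hcZ : c ∈ Subgroup.centralizer (P : Set G) := hc.2
    have hg : g ∈ (P : Set G) * (Q : Set G) := by rw [hprod]; trivial
    obtain ⟨x, hx, y, hy, rfl⟩ := hg
    have h1 : Commute x c := Subgroup.mem_centralizer_iff.mp hcZ x hx
    have h2 : Commute y c := by
      obtain ⟨g₀, hg₀⟩ := hQc.exists_generator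
      obtain ⟨m, hm⟩ := hg₀ ⟨y, hy⟩
      obtain ⟨k, hk⟩ := hg₀ ⟨c, hcQ⟩
      have hcm : (g₀ ^ m * g₀ ^ k : Q) = g₀ ^ k * g₀ ^ m := by
        rw [← zpow_add, ← zpow_add, add_comm]
      have hm' : (g₀ : Q) ^ m = ⟨y, hy⟩ := hm
      have hk' : (g₀ : Q) ^ k = ⟨c, hcQ⟩ := hk
      have h3 := congrArg (Subgroup.subtype Q) hcm
      rw [map_mul, map_mul, hm', hk'] at h3
      exact h3
    exact h1.mul_left h2
  -- the key step: C is contained in every maximal subgroup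
  have key : ∀ M : Subgroup G, IsCoatom M → C ≤ M := by
    intro M hM
    by_contra hn
    obtain ⟨c, hcC, hcM⟩ := SetLike.not_le_iff_exists.mp hn
    have hcQ : c ∈ Q := hCleQ hcC
    haveI hZnormal : (Subgroup.zpowers c).Normal := by
      constructor
      rintro z ⟨k, rfl⟩ g
      have hcom : Commute g (c ^ k) := (hcent c hcC g).zpow_right k
      have heq : g * c ^ k * g⁻¹ = c ^ k := by rw [hcom.eq]; group
      rw [heq]
      exact Subgroup.zpow_mem _ (Subgroup.mem_zpowers c) k
    have htop : M ⊔ Subgroup.zpowers c = ⊤ :=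
      hM.2 _ (left_lt_sup.mpr (by rwa [Subgroup.zpowers_le]))
    -- c has q-power order
    obtain ⟨b, hb⟩ := hQ ⟨c, hcQ⟩
    have hcb : c ^ q ^ b = 1 := by
      have := congrArg (Subgroup.subtype Q) hb
      simpa using this
    -- P ≤ M
    have hPM : P ≤ M := by
      intro x hx
      obtain ⟨a, ha⟩ := hP ⟨x, hx⟩
      have hxa : x ^ p ^ a = 1 := by
        have := congrArg (Subgroup.subtype P) ha
        simpa using this
      have hxmem : x ∈ (M : Set G) * (Subgroup.zpowers c : Set G) := by
        rw [← Subgroup.mul_normal, htop]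
        exact Subgroup.mem_top x
      obtain ⟨m, hm, z, hz, hmz⟩ := hxmem
      obtain ⟨k, rfl⟩ := hz
      have hcom : Commute x ((c ^ k)⁻¹) := ((hcent c hcC x).zpow_right k).inv_right
      have hmx : m = x * (c ^ k)⁻¹ := by rw [← hmz]; group
      have hzq : ((c ^ k)⁻¹) ^ q ^ b = 1 := by
        rw [inv_pow, ← zpow_natCast (c ^ k) (q ^ b), ← zpow_mul,
          mul_comm k (((q ^ b : ℕ) : ℤ)), zpow_mul, zpow_natCast, hcb, one_zpow, inv_one]
      have hqpow : x ^ q ^ b ∈ M := by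
        have h4 : m ^ q ^ b = x ^ q ^ b * ((c ^ k)⁻¹) ^ q ^ b := by
          rw [hmx, hcom.mul_pow]
        rw [hzq, mul_one] at h4
        rw [← h4]
        exact pow_mem hm _
      have hco : IsCoprime ((p ^ a : ℕ) : ℤ) ((q ^ b : ℕ) : ℤ) :=
        Nat.isCoprime_iff_coprime.mpr (Nat.Coprime.pow a b ((Nat.coprime_primes hp hq).mpr hpq))
      obtain ⟨u, v, huv⟩ := hco
      have hx1 : x = (x ^ p ^ a) ^ u * (x ^ q ^ b) ^ v := by
        have h5 : x ^ (u * ((p ^ a : ℕ) : ℤ) + v * ((q ^ b : ℕ) : ℤ)) = x := by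
          rw [huv, zpow_one]
        conv_lhs => rw [← h5]
        rw [zpow_add, mul_comm u (((p ^ a : ℕ) : ℤ)), mul_comm v (((q ^ b : ℕ) : ℤ)),
          zpow_mul, zpow_mul, zpow_natCast, zpow_natCast]
      rw [hx1, hxa, one_zpow, one_mul]
      exact Subgroup.zpow_mem M hqpow v
    -- use the linear order on subgroups of the cyclic q-group Q
    rcases subgroup_le_total'' hq hQ hQc ((M ⊓ Q).subgroupOf Q) (C.subgroupOf Q) with hle | hle
    · -- M ⊓ Q ≤ C, derive Q ≤ C, contradiction with hC
      have hMQC : M ⊓ Q ≤ C := by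
        intro x hx
        have h1 : (⟨x, hx.2⟩ : Q) ∈ (M ⊓ Q).subgroupOf Q := by
          rw [Subgroup.mem_subgroupOf]; exact hx
        have h2 := hle h1
        rwa [Subgroup.mem_subgroupOf] at h2
      have hMle : M ≤ P ⊔ C := by
        intro m hm
        have hmem : m ∈ (P : Set G) * (Q : Set G) := by rw [hprod]; trivial
        obtain ⟨x, hx, y, hy, rfl⟩ := hmem
        have hxM : x ∈ M := hPM hx
        have hyM : y ∈ M := by
          have h6 : y = x⁻¹ * (x * y) := by group
          rw [h6]; exact mul_mem (inv_mem hxM) hm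
        exact mul_mem (Subgroup.mem_sup_left hx) (Subgroup.mem_sup_right (hMQC ⟨hyM, hy⟩))
      have htople : (⊤ : Subgroup G) ≤ P ⊔ C := by
        rw [← htop]
        exact sup_le hMle (by rw [Subgroup.zpowers_le]; exact Subgroup.mem_sup_right hcC)
      have hQC : Q ≤ C := by
        intro y hy
        have hy2 : y ∈ (P : Set G) * (C : Set G) := by
          rw [← Subgroup.normal_mul]
          exact htople (Subgroup.mem_top y)
        obtain ⟨x, hx, z, hz, rfl⟩ := hy2
        have hzQ : z ∈ Q := hCleQ hz
        have hxQ : x ∈ Q := by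
          have h7 : x = x * z * z⁻¹ := by group
          rw [h7]; exact mul_mem hy (inv_mem hzQ)
        have h8 : x ∈ P ⊓ Q := ⟨hx, hxQ⟩
        rw [hPQ, Subgroup.mem_bot] at h8
        show x * z ∈ C
        rw [h8, one_mul]
        exact hz
      exact absurd hQC hC.not_ge
    · -- C ≤ M ⊓ Q, contradicting c ∉ M
      have h1 : (⟨c, hcQ⟩ : Q) ∈ C.subgroupOf Q := by
        rw [Subgroup.mem_subgroupOf]; exact hcC
      have h2 := hle h1
      rw [Subgroup.mem_subgroupOf] at h2
      exact hcM h2.1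
  refine sup_le (frattini_map_le_frattini' P) ?_
  rw [frattini, Order.radical]
  exact le_iInf₂ key
end

section
/- Let p and q be distinct primes and let G be a finite group with subgroups P and Q such that P is a normal p-subgroup, Q is a cyclic q-subgroup, P ∩ Q = 1, PQ = G, and every non-trivial element of Q acts fixed-point-freely on P by conjugation. Then every subgroup H of G satisfies one of the following: (1) H is a p-group or a q-group; or (2) there exist an element x of G and subgroups R ≤ P and S ≤ Q such that x⁻¹Hx is the subgroup generated by R and S (which equals the set product RS). -/
lemma aux_card (p q : ℕ) (hp : p.Prime) (hq : q.Prime) (hpq : p ≠ q) {a b n : ℕ}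
    (hn0 : n ≠ 0) (hdvd : n ∣ p ^ a * q ^ b) :
    n = p ^ n.factorization p * q ^ n.factorization q := by
  have hsupp : n.factorization.support ⊆ {p, q} := by
    intro r hr
    rw [Nat.support_factorization] at hr
    have hrp : r.Prime := Nat.prime_of_mem_primeFactors hr
    have hrn : r ∣ n := Nat.dvd_of_mem_primeFactors hr
    rcases hrp.dvd_mul.mp (hrn.trans hdvd) with h | h
    · simp [(Nat.prime_dvd_prime_iff_eq hrp hp).mp (hrp.dvd_of_dvd_pow h)]
    · simp [(Nat.prime_dvd_prime_iff_eq hrp hq).mp (hrp.dvd_of_dvd_pow h)]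
  conv_lhs => rw [← Nat.factorization_prod_pow_eq_self hn0]
  rw [Finsupp.prod_of_support_subset _ hsupp (fun x k => x ^ k) (by intros; simp),
    Finset.prod_pair hpq]

open scoped Pointwise in
theorem subgroups_of_fixed_point_free_product (p q : ℕ) (hp : p.Prime) (hq : q.Prime)
    (hpq : p ≠ q) (G : Type*) [Group G] [Finite G] (P Q : Subgroup G) [P.Normal]
    (hP : IsPGroup p P) (hQ : IsPGroup q Q) (hQc : IsCyclic Q)
    (hPQ : P ⊓ Q = ⊥) (hprod : (P : Set G) * (Q : Set G) = Set.univ)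
    (hfpf : ∀ y ∈ Q, y ≠ 1 → ∀ u ∈ P, y * u * y⁻¹ = u → u = 1)
    (H : Subgroup G) :
    (IsPGroup p H ∨ IsPGroup q H) ∨
    (∃ x : G, ∃ R S : Subgroup G, R ≤ P ∧ S ≤ Q ∧
      Subgroup.map (MulAut.conj x⁻¹).toMonoidHom H = R ⊔ S ∧
      ((R ⊔ S : Subgroup G) : Set G) = (R : Set G) * (S : Set G)) := by
  haveI : Fact p.Prime := ⟨hp⟩
  haveI : Fact q.Prime := ⟨hq⟩
  right
  -- basic cardinality facts
  have hcompl : Subgroup.IsComplement' P Q :=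
    Subgroup.isComplement'_of_disjoint_and_mul_eq_univ (disjoint_iff.mpr hPQ) hprod
  obtain ⟨a, hPa⟩ := IsPGroup.iff_card.mp hP
  obtain ⟨b, hQb⟩ := IsPGroup.iff_card.mp hQ
  have hG : Nat.card G = p ^ a * q ^ b := by rw [← hcompl.card_mul, hPa, hQb]
  have hfp : (Nat.card G).factorization p = a := by
    rw [hG, Nat.factorization_mul (pow_ne_zero _ hp.pos.ne') (pow_ne_zero _ hq.pos.ne'),
      hp.factorization_pow, hq.factorization_pow]
    simp [Finsupp.single_apply, hpq, Ne.symm hpq]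
  have hfq : (Nat.card G).factorization q = b := by
    rw [hG, Nat.factorization_mul (pow_ne_zero _ hp.pos.ne') (pow_ne_zero _ hq.pos.ne'),
      hp.factorization_pow, hq.factorization_pow]
    simp [Finsupp.single_apply, hpq, Ne.symm hpq]
  -- P and Q as Sylow subgroups
  let PS : Sylow p G := Sylow.ofCard P (by rw [hPa, hfp])
  let QS : Sylow q G := Sylow.ofCard Q (by rw [hQb, hfq])
  -- every p-subgroup of G is contained in P
  have hPmax : ∀ W : Subgroup G, IsPGroup p W → W ≤ P := by
    intro W hW
    obtain ⟨T, hT⟩ := hW.exists_le_sylow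
    haveI : (PS : Subgroup G).Normal := ‹P.Normal›
    haveI := Sylow.unique_of_normal PS this
    have : T = PS := Subsingleton.elim _ _
    rw [this] at hT
    exact hT
  -- a Sylow q-subgroup of H, pushed to G
  obtain ⟨S₀⟩ : Nonempty (Sylow q H) := inferInstance
  set S₁ : Subgroup G := (S₀ : Subgroup H).map H.subtype with hS₁def
  have hS₁H : S₁ ≤ H := Subgroup.map_subtype_le _
  have hS₁pg : IsPGroup q S₁ := S₀.isPGroup'.map H.subtype
  have hcardS₁ : Nat.card S₁ = q ^ (Nat.card H).factorization q := by
    rw [← Nat.card_congr (Subgroup.equivMapOfInjective (S₀ : Subgroup H) H.subtype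
      H.subtype_injective).toEquiv, S₀.card_eq_multiplicity]
  -- find x conjugating S₁ into Q
  obtain ⟨T, hT⟩ := hS₁pg.exists_le_sylow
  obtain ⟨x, hx⟩ := MulAction.exists_smul_eq G QS T
  set φ := (MulAut.conj x⁻¹).toMonoidHom with hφdef
  have hφinj : Function.Injective φ := (MulAut.conj x⁻¹).injective
  set K : Subgroup G := H.map φ with hKdef
  set S : Subgroup G := S₁.map φ with hSdef
  set R : Subgroup G := K ⊓ P with hRdef
  have hSQ : S ≤ Q := by
    rintro y ⟨s, hs, rfl⟩
    have hsT : s ∈ (T : Subgroup G) := hT hs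
    rw [← hx, Sylow.coe_subgroup_smul] at hsT
    rw [Subgroup.mem_pointwise_smul_iff_inv_smul_mem] at hsT
    have : (MulAut.conj x)⁻¹ • s = φ s := by
      simp [hφdef, MulAut.smul_def]
    rwa [this] at hsT
  have hSK : S ≤ K := Subgroup.map_mono hS₁H
  have hRK : R ≤ K := inf_le_left
  have hRP : R ≤ P := inf_le_right
  have hcardHK : Nat.card H = Nat.card K :=
    Nat.card_congr (Subgroup.equivMapOfInjective H φ hφinj).toEquiv
  have hcardS : Nat.card S = q ^ (Nat.card K).factorization q := by
    rw [← Nat.card_congr (Subgroup.equivMapOfInjective S₁ φ hφinj).toEquiv, hcardS₁, hcardHK]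
  -- R is the Sylow p-subgroup of K
  have hRpg : IsPGroup p R := hP.to_le hRP
  obtain ⟨TK, hTK⟩ := (hRpg.comap_subtype (K := K)).exists_le_sylow
  have hWpg : IsPGroup p ((TK : Subgroup K).map K.subtype) := TK.isPGroup'.map K.subtype
  have hWR : (TK : Subgroup K).map K.subtype ≤ R :=
    le_inf (Subgroup.map_subtype_le _) (hPmax _ hWpg)
  have hRW : R ≤ (TK : Subgroup K).map K.subtype := by
    have h1 : R = (R.subgroupOf K).map K.subtype := by
      rw [Subgroup.subgroupOf_map_subtype, inf_eq_left.mpr hRK]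
    rw [h1]
    exact Subgroup.map_mono hTK
  have hReq : R = (TK : Subgroup K).map K.subtype := le_antisymm hRW hWR
  have hcardR : Nat.card R = p ^ (Nat.card K).factorization p := by
    rw [hReq, ← Nat.card_congr (Subgroup.equivMapOfInjective (TK : Subgroup K) K.subtype
      K.subtype_injective).toEquiv, TK.card_eq_multiplicity]
  -- cardinality of K
  have hK0 : Nat.card K ≠ 0 := Nat.card_pos.ne'
  have hKdvd : Nat.card K ∣ p ^ a * q ^ b := hG ▸ Subgroup.card_subgroup_dvd_card K
  have hcardK : Nat.card R * Nat.card S = Nat.card K := by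
    rw [hcardR, hcardS]
    exact (aux_card p q hp hq hpq hK0 hKdvd).symm
  have hcop : Nat.Coprime (Nat.card R) (Nat.card S) := by
    rw [hcardR, hcardS]
    exact Nat.Coprime.pow _ _ ((Nat.coprime_primes hp hq).mpr hpq)
  -- complement inside K
  have hcardR' : Nat.card (R.subgroupOf K) = Nat.card R :=
    Nat.card_congr (Subgroup.subgroupOfEquivOfLe hRK).toEquiv
  have hcardS' : Nat.card (S.subgroupOf K) = Nat.card S :=
    Nat.card_congr (Subgroup.subgroupOfEquivOfLe hSK).toEquiv
  have hc : Subgroup.IsComplement' (R.subgroupOf K) (S.subgroupOf K) :=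
    Subgroup.isComplement'_of_coprime (by rw [hcardR', hcardS', hcardK])
      (by rw [hcardR', hcardS']; exact hcop)
  have hKRS : K = R ⊔ S := by
    have h2 := congrArg (Subgroup.map K.subtype) hc.sup_eq_top
    rwa [Subgroup.map_sup, Subgroup.subgroupOf_map_subtype, Subgroup.subgroupOf_map_subtype,
      ← MonoidHom.range_eq_map, Subgroup.range_subtype, inf_eq_left.mpr hRK,
      inf_eq_left.mpr hSK, eq_comm] at h2
  refine ⟨x, R, S, hRP, hSQ, hKRS, ?_⟩
  rw [← hKRS]
  ext z
  constructor
  · intro hz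
    have hmem : (⟨z, hz⟩ : K) ∈ ((R.subgroupOf K : Set K) * (S.subgroupOf K : Set K)) := by
      rw [hc.mul_eq]; trivial
    obtain ⟨r, hr, s, hs, hrs⟩ := hmem
    refine ⟨(r : G), hr, (s : G), hs, ?_⟩
    exact congrArg (Subtype.val) hrs
  · rintro ⟨r, hr, s, hs, rfl⟩
    exact mul_mem (hRK hr) (hSK hs)
end
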